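/- arXiv:0805.0184 — 3 statements merged into one kernel-verified Lean document; each statement's English description precedes it below -/
import Mathlib

section
/- The spectral density f(ω₁,ω₂) = 1/(4π²κ(1 − 2ζcos ω₁ − 2ζcos ω₂)) of the SFCAR model with precision κ > 0 and edge dependence factor 0 ≤ ζ < 1/4 is strictly positive on (−π,π]² and integrable, and its integral over (−π,π]² (the signal power P_s = γ₀₀) equals (2/(πκ))·K(4ζ), where K is the complete elliptic integral of the first kind. -/
open Real MeasureTheory intervalIntegral Filter Topology

lemma lemA {b : ℝ} (hb : |b| < 1) :
    ∫ x in (-π)..π, (1 - b * Real.cos x)⁻¹ = 2 * π / Real.sqrt (1 - b ^ 2) := by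
  obtain ⟨hb1, hb2⟩ := abs_lt.1 hb
  have h1b : (0:ℝ) < 1 - b := by linarith
  have h1b' : (0:ℝ) < 1 + b := by linarith
  have hsq : (0:ℝ) < 1 - b ^ 2 := by nlinarith
  have hpos : ∀ x : ℝ, 0 < 1 - b * Real.cos x := by
    intro x
    have h1 : b * Real.cos x ≤ |b * Real.cos x| := le_abs_self _
    have h2 : |b * Real.cos x| ≤ |b| := by
      rw [abs_mul]
      calc |b| * |Real.cos x| ≤ |b| * 1 := by
            exact mul_le_mul_of_nonneg_left (Real.abs_cos_le_one x) (abs_nonneg b)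
        _ = |b| := mul_one _
    nlinarith
  set c : ℝ := Real.sqrt ((1 + b) / (1 - b)) with hc
  have hcpos : 0 < c := Real.sqrt_pos.2 (div_pos h1b' h1b)
  have hc2 : c ^ 2 = (1 + b) / (1 - b) := Real.sq_sqrt (div_pos h1b' h1b).le
  have hkey : c * (1 - b) = Real.sqrt (1 - b ^ 2) := by
    rw [hc, show (1:ℝ) - b ^ 2 = (1 + b) / (1 - b) * (1 - b) ^ 2 by field_simp; ring,
      Real.sqrt_mul (div_pos h1b' h1b).le, Real.sqrt_sq h1b.le]
  -- antiderivative
  set F : ℝ → ℝ := fun x => 2 / Real.sqrt (1 - b ^ 2) * Real.arctan (c * Real.tan (x / 2)) with hF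
  have hderiv : ∀ x ∈ Set.Ioo (-π) π, HasDerivAt F ((1 - b * Real.cos x)⁻¹) x := by
    intro x hx
    have hx2 : x / 2 ∈ Set.Ioo (-(π/2)) (π/2) := by
      constructor <;> [linarith [hx.1]; linarith [hx.2]]
    have hco : 0 < Real.cos (x / 2) := Real.cos_pos_of_mem_Ioo hx2
    have htan : HasDerivAt (fun y : ℝ => Real.tan (y / 2)) (1 / Real.cos (x / 2) ^ 2 * (1 / 2)) x := by
      have h1 : HasDerivAt (fun y : ℝ => y / 2) (1 / 2) x := by
        simpa using (hasDerivAt_id x).div_const 2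
      exact (Real.hasDerivAt_tan hco.ne').comp x h1
    have hctan : HasDerivAt (fun y : ℝ => c * Real.tan (y / 2))
        (c * (1 / Real.cos (x / 2) ^ 2 * (1 / 2))) x := htan.const_mul c
    have harc : HasDerivAt (fun y : ℝ => Real.arctan (c * Real.tan (y / 2)))
        ((1 + (c * Real.tan (x / 2)) ^ 2)⁻¹ * (c * (1 / Real.cos (x / 2) ^ 2 * (1 / 2)))) x := by
      simpa [one_div, Function.comp_def] using (Real.hasDerivAt_arctan (c * Real.tan (x / 2))).comp x hctan
    have hFd : HasDerivAt (fun y : ℝ => 2 / Real.sqrt (1 - b ^ 2) * Real.arctan (c * Real.tan (y / 2)))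
        (2 / Real.sqrt (1 - b ^ 2) * ((1 + (c * Real.tan (x / 2)) ^ 2)⁻¹ * (c * (1 / Real.cos (x / 2) ^ 2 * (1 / 2))))) x :=
      harc.const_mul (2 / Real.sqrt (1 - b ^ 2))
    convert hFd using 1
    -- algebraic identity
    have hs : Real.sin (x / 2) ^ 2 + Real.cos (x / 2) ^ 2 = 1 := Real.sin_sq_add_cos_sq _
    have hcosx : Real.cos x = Real.cos (x / 2) ^ 2 - Real.sin (x / 2) ^ 2 := by
      have h := Real.cos_two_mul (x / 2)
      rw [show 2 * (x / 2) = x by ring] at h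
      linarith [hs]
    have htandef : Real.tan (x / 2) = Real.sin (x / 2) / Real.cos (x / 2) := Real.tan_eq_sin_div_cos _
    have hden : 1 + (c * Real.tan (x / 2)) ^ 2
        = (1 - b * Real.cos x) / ((1 - b) * Real.cos (x / 2) ^ 2) := by
      rw [htandef, hcosx, mul_pow, hc2, div_pow]
      field_simp
      nlinarith [hs]
    rw [hden]
    have hx1 : (0:ℝ) < 1 - b * Real.cos x := hpos x
    have hsqrtpos : 0 < Real.sqrt (1 - b ^ 2) := Real.sqrt_pos.2 hsq
    field_simp
    linear_combination (-1) * hkey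
  have hcont : Continuous fun x : ℝ => (1 - b * Real.cos x)⁻¹ := by
    refine (continuous_const.sub (continuous_const.mul Real.continuous_cos)).inv₀ ?_
    exact fun x => (hpos x).ne'
  have hint : IntervalIntegrable (fun x => (1 - b * Real.cos x)⁻¹) volume (-π) π :=
    hcont.intervalIntegrable _ _
  have hsqrtpos : 0 < Real.sqrt (1 - b ^ 2) := Real.sqrt_pos.2 hsq
  -- limits
  have hhalf : Tendsto (fun x : ℝ => x / 2) (𝓝[<] π) (𝓝[<] (π / 2)) := by
    refine tendsto_nhdsWithin_of_tendsto_nhds_of_eventually_within _ ?_ ?_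
    · exact ((continuous_id.div_const 2).tendsto π).mono_left nhdsWithin_le_nhds
    · filter_upwards [self_mem_nhdsWithin] with y hy
      show y / 2 < π / 2
      have : y < π := hy
      linarith
  have hhalf' : Tendsto (fun x : ℝ => x / 2) (𝓝[>] (-π)) (𝓝[>] (-(π / 2))) := by
    refine tendsto_nhdsWithin_of_tendsto_nhds_of_eventually_within _ ?_ ?_
    · have := ((continuous_id.div_const 2).tendsto (-π)).mono_left
        (nhdsWithin_le_nhds (s := Set.Ioi (-π)))
      simpa [neg_div] using this
    · filter_upwards [self_mem_nhdsWithin] with y (hy : -π < y)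
      show -(π / 2) < y / 2
      linarith
  have hb_top : Tendsto F (𝓝[<] π) (𝓝 (2 / Real.sqrt (1 - b ^ 2) * (π / 2))) := by
    have h1 : Tendsto (fun x : ℝ => c * Real.tan (x / 2)) (𝓝[<] π) atTop :=
      (Real.tendsto_tan_pi_div_two.comp hhalf).const_mul_atTop hcpos
    have h2 : Tendsto (fun x : ℝ => Real.arctan (c * Real.tan (x / 2))) (𝓝[<] π) (𝓝 (π / 2)) :=
      (Real.tendsto_arctan_atTop.mono_right nhdsWithin_le_nhds).comp h1
    exact h2.const_mul _
  have ha_bot : Tendsto F (𝓝[>] (-π)) (𝓝 (2 / Real.sqrt (1 - b ^ 2) * (-(π / 2)))) := by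
    have h1 : Tendsto (fun x : ℝ => c * Real.tan (x / 2)) (𝓝[>] (-π)) atBot :=
      (Real.tendsto_tan_neg_pi_div_two.comp hhalf').const_mul_atBot hcpos
    have h2 : Tendsto (fun x : ℝ => Real.arctan (c * Real.tan (x / 2))) (𝓝[>] (-π))
        (𝓝 (-(π / 2))) :=
      (Real.tendsto_arctan_atBot.mono_right nhdsWithin_le_nhds).comp h1
    exact h2.const_mul _
  have hpi : -π < π := by linarith [Real.pi_pos]
  rw [intervalIntegral.integral_eq_sub_of_hasDerivAt_of_tendsto hpi hderiv hint ha_bot hb_top]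
  field_simp
  ring

lemma shiftInt (f : ℝ → ℝ) (hf : Function.Periodic f (2*π)) (c : ℝ) :
    ∫ x in (-π)..π, f (x + c) = ∫ x in (-π)..π, f x := by
  rw [intervalIntegral.integral_comp_add_right]
  have h := hf.intervalIntegral_add_eq (-π + c) (-π)
  rw [show -π + c + 2*π = π + c by ring, show -π + 2*π = π by ring] at h
  exact h

lemma cos_sum_id (x s : ℝ) : Real.cos x + Real.cos (s + x)
    = 2 * Real.cos (x + s/2) * Real.cos (s/2) := by
  have hc : Real.cos s = 2 * Real.cos (s/2) ^ 2 - 1 := by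
    have h := Real.cos_two_mul (s/2); rw [show 2*(s/2) = s by ring] at h; exact h
  have hs : Real.sin s = 2 * Real.sin (s/2) * Real.cos (s/2) := by
    have h := Real.sin_two_mul (s/2); rw [show 2*(s/2) = s by ring] at h; exact h
  rw [Real.cos_add s x, Real.cos_add x (s/2), hc, hs]
  ring

/-- The complete elliptic integral of the first kind. -/
noncomputable def ellipticK (k : ℝ) : ℝ :=
  ∫ θ in Set.Ioc 0 (π/2), 1 / Real.sqrt (1 - k ^ 2 * Real.sin θ ^ 2)

/-- The SFCAR spectral density is positive on `(−π,π]²`, integrable, and its integral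
(the power `P_s = γ₀₀`) equals `(2/(πκ)) K(4ζ)`. -/
theorem stmt7 (κ ζ : ℝ) (hκ : 0 < κ) (hζ0 : 0 ≤ ζ) (hζ1 : ζ < 1/4) :
    (∀ ω : ℝ × ℝ, ω ∈ (Set.Ioc (-π) π ×ˢ Set.Ioc (-π) π) →
      0 < 1 / (4 * π ^ 2 * κ * (1 - 2 * ζ * Real.cos ω.1 - 2 * ζ * Real.cos ω.2))) ∧
    IntegrableOn
      (fun ω : ℝ × ℝ =>
        1 / (4 * π ^ 2 * κ * (1 - 2 * ζ * Real.cos ω.1 - 2 * ζ * Real.cos ω.2)))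
      (Set.Ioc (-π) π ×ˢ Set.Ioc (-π) π) ∧
    (∫ ω : ℝ × ℝ in (Set.Ioc (-π) π ×ˢ Set.Ioc (-π) π),
        1 / (4 * π ^ 2 * κ * (1 - 2 * ζ * Real.cos ω.1 - 2 * ζ * Real.cos ω.2)))
      = (2 / (π * κ)) * ellipticK (4 * ζ) := by
  have hπ : (0:ℝ) < π := Real.pi_pos
  have h4ζ : 0 < 1 - 4*ζ := by linarith
  have hA : (0:ℝ) < 4 * π ^ 2 * κ := by positivity
  have hDpos : ∀ x y : ℝ, 0 < 1 - 2*ζ*Real.cos x - 2*ζ*Real.cos y := by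
    intro x y
    have h1 : 2*ζ*Real.cos x ≤ 2*ζ := by nlinarith [Real.cos_le_one x]
    have h2 : 2*ζ*Real.cos y ≤ 2*ζ := by nlinarith [Real.cos_le_one y]
    linarith
  have hGpos : ∀ x s : ℝ, 0 < 1 - 4*ζ*Real.cos (s/2) * Real.cos x := by
    intro x s
    have h1 : 4*ζ*Real.cos (s/2) * Real.cos x ≤ |4*ζ*Real.cos (s/2) * Real.cos x| :=
      le_abs_self _
    have h2 : |4*ζ*Real.cos (s/2) * Real.cos x| ≤ 4*ζ := by
      have he : |4*ζ*Real.cos (s/2) * Real.cos x|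
          = (4*ζ) * (|Real.cos (s/2)| * |Real.cos x|) := by
        rw [abs_mul, abs_mul, abs_of_nonneg (by positivity : (0:ℝ) ≤ 4*ζ), mul_assoc]
      rw [he]
      have hm : |Real.cos (s/2)| * |Real.cos x| ≤ 1 :=
        mul_le_one₀ (Real.abs_cos_le_one _) (abs_nonneg _) (Real.abs_cos_le_one _)
      nlinarith [hζ0]
    linarith
  have hcontD : Continuous fun ω : ℝ × ℝ => 1 - 2*ζ*Real.cos ω.1 - 2*ζ*Real.cos ω.2 :=
    (continuous_const.sub
      (continuous_const.mul (Real.continuous_cos.comp continuous_fst))).sub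
      (continuous_const.mul (Real.continuous_cos.comp continuous_snd))
  have hcontG : Continuous fun ω : ℝ × ℝ =>
      (1 - 4*ζ*Real.cos (ω.2/2) * Real.cos (ω.1 + ω.2/2))⁻¹ := by
    refine Continuous.inv₀ ?_ fun ω => (hGpos (ω.1 + ω.2/2) ω.2).ne'
    exact continuous_const.sub ((continuous_const.mul
      (Real.continuous_cos.comp (continuous_snd.div_const 2))).mul
      (Real.continuous_cos.comp (continuous_fst.add (continuous_snd.div_const 2))))
  have hsubset : (Set.Ioc (-π) π ×ˢ Set.Ioc (-π) π) ⊆ (Set.Icc (-π) π ×ˢ Set.Icc (-π) π) :=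
    Set.prod_mono Set.Ioc_subset_Icc_self Set.Ioc_subset_Icc_self
  have hcompact : IsCompact (Set.Icc (-π) π ×ˢ Set.Icc (-π) π) :=
    isCompact_Icc.prod isCompact_Icc
  have hIntf : IntegrableOn
      (fun ω : ℝ × ℝ =>
        1 / (4 * π ^ 2 * κ * (1 - 2 * ζ * Real.cos ω.1 - 2 * ζ * Real.cos ω.2)))
      (Set.Ioc (-π) π ×ˢ Set.Ioc (-π) π) := by
    have hc : Continuous fun ω : ℝ × ℝ =>
        1 / (4 * π ^ 2 * κ * (1 - 2 * ζ * Real.cos ω.1 - 2 * ζ * Real.cos ω.2)) := by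
      refine continuous_const.div (continuous_const.mul hcontD) fun ω => ?_
      have := hDpos ω.1 ω.2
      positivity
    exact (hc.continuousOn.integrableOn_compact hcompact).mono_set hsubset
  have hIntcore : IntegrableOn
      (fun ω : ℝ × ℝ => (1 - 2*ζ*Real.cos ω.1 - 2*ζ*Real.cos ω.2)⁻¹)
      (Set.Ioc (-π) π ×ˢ Set.Ioc (-π) π) := by
    have hc : Continuous fun ω : ℝ × ℝ =>
        (1 - 2*ζ*Real.cos ω.1 - 2*ζ*Real.cos ω.2)⁻¹ :=
      hcontD.inv₀ fun ω => (hDpos ω.1 ω.2).ne'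
    exact (hc.continuousOn.integrableOn_compact hcompact).mono_set hsubset
  have hIntG : IntegrableOn
      (fun ω : ℝ × ℝ => (1 - 4*ζ*Real.cos (ω.2/2) * Real.cos (ω.1 + ω.2/2))⁻¹)
      (Set.Ioc (-π) π ×ˢ Set.Ioc (-π) π) :=
    (hcontG.continuousOn.integrableOn_compact hcompact).mono_set hsubset
  have hle : -π ≤ π := by linarith
  refine ⟨?_, hIntf, ?_⟩
  · intro ω _
    have := hDpos ω.1 ω.2
    positivity
  -- main computation
  -- key identity for the core double integral
  have key : (∫ ω : ℝ × ℝ in (Set.Ioc (-π) π ×ˢ Set.Ioc (-π) π),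
      (1 - 2*ζ*Real.cos ω.1 - 2*ζ*Real.cos ω.2)⁻¹) = 8 * π * ellipticK (4*ζ) := by
    rw [Measure.volume_eq_prod] at hIntcore ⊢
    rw [MeasureTheory.setIntegral_prod _ hIntcore]
    -- inner shift in y
    have inner1 : ∀ x : ℝ, (∫ y in Set.Ioc (-π) π, (1 - 2*ζ*Real.cos x - 2*ζ*Real.cos y)⁻¹)
        = ∫ s in Set.Ioc (-π) π, (1 - 4*ζ*Real.cos (s/2) * Real.cos (x + s/2))⁻¹ := by
      intro x
      rw [← intervalIntegral.integral_of_le hle, ← intervalIntegral.integral_of_le hle]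
      have hper : Function.Periodic (fun y => (1 - 2*ζ*Real.cos x - 2*ζ*Real.cos y)⁻¹) (2*π) := by
        intro y; simp [Real.cos_add_two_pi]
      rw [← shiftInt _ hper x]
      refine intervalIntegral.integral_congr fun s _ => ?_
      rw [show 1 - 2*ζ*Real.cos x - 2*ζ*Real.cos (s + x)
          = 1 - 4*ζ*Real.cos (s/2) * Real.cos (x + s/2) by
        linear_combination (-2*ζ) * cos_sum_id x s]
    simp_rw [inner1]
    -- swap order of integration
    have hswap : (∫ x in Set.Ioc (-π) π, ∫ s in Set.Ioc (-π) π,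
          (1 - 4*ζ*Real.cos (s/2) * Real.cos (x + s/2))⁻¹)
        = ∫ s in Set.Ioc (-π) π, ∫ x in Set.Ioc (-π) π,
          (1 - 4*ζ*Real.cos (s/2) * Real.cos (x + s/2))⁻¹ := by
      apply MeasureTheory.integral_integral_swap
      rw [Function.uncurry_def, Measure.prod_restrict]
      exact hIntG
    rw [hswap]
    -- inner integral over x via lemA
    have inner2 : ∀ s : ℝ, (∫ x in Set.Ioc (-π) π,
          (1 - 4*ζ*Real.cos (s/2) * Real.cos (x + s/2))⁻¹)
        = 2 * π / Real.sqrt (1 - (4*ζ*Real.cos (s/2)) ^ 2) := by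
      intro s
      rw [← intervalIntegral.integral_of_le hle]
      have hper : Function.Periodic (fun x => (1 - 4*ζ*Real.cos (s/2) * Real.cos x)⁻¹) (2*π) := by
        intro y; simp [Real.cos_add_two_pi]
      have hsh := shiftInt (fun x => (1 - 4*ζ*Real.cos (s/2) * Real.cos x)⁻¹) hper (s/2)
      rw [hsh]
      have hb : |4*ζ*Real.cos (s/2)| < 1 := by
        have he : |4*ζ*Real.cos (s/2)| = 4*ζ*|Real.cos (s/2)| := by
          rw [abs_mul, abs_of_nonneg (by positivity : (0:ℝ) ≤ 4*ζ)]
        rw [he]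
        nlinarith [Real.abs_cos_le_one (s/2), abs_nonneg (Real.cos (s/2))]
      exact lemA hb
    simp_rw [inner2]
    -- substitution s = 2θ
    rw [← intervalIntegral.integral_of_le hle]
    have hcomp : (∫ s in (-π)..π, 2 * π / Real.sqrt (1 - (4*ζ*Real.cos (s/2)) ^ 2))
        = (2:ℝ) • ∫ θ in (-π/2)..(π/2),
            2 * π / Real.sqrt (1 - (4*ζ*Real.cos θ) ^ 2) := by
      have := intervalIntegral.integral_comp_div
        (a := -π) (b := π)
        (f := fun θ => 2 * π / Real.sqrt (1 - (4*ζ*Real.cos θ) ^ 2)) (two_ne_zero)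
      rw [this]
    rw [hcomp]
    -- even function: integral over (-π/2, π/2) is twice over (0, π/2)
    have hintf : ∀ a b : ℝ, IntervalIntegrable
        (fun θ => 2 * π / Real.sqrt (1 - (4*ζ*Real.cos θ) ^ 2)) volume a b := by
      intro a b
      refine (Continuous.intervalIntegrable ?_ _ _)
      refine continuous_const.div ?_ fun θ => ?_
      · fun_prop
      · have h16 : 16*ζ^2 < 1 := by nlinarith
        have hcos2 : Real.cos θ ^ 2 ≤ 1 := Real.cos_sq_le_one θ
        have h1 : (4*ζ*Real.cos θ) ^ 2 < 1 := by nlinarith [sq_nonneg ζ]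
        exact (Real.sqrt_pos.2 (by linarith)).ne'
    have heven : (∫ θ in (-(π/2))..0, 2 * π / Real.sqrt (1 - (4*ζ*Real.cos θ) ^ 2))
        = ∫ θ in (0:ℝ)..(π/2), 2 * π / Real.sqrt (1 - (4*ζ*Real.cos θ) ^ 2) := by
      have h := intervalIntegral.integral_comp_neg (a := (0:ℝ)) (b := π/2)
        (fun θ => 2 * π / Real.sqrt (1 - (4*ζ*Real.cos θ) ^ 2))
      simp only [Real.cos_neg, neg_zero] at h
      exact h.symm
    have hsplit : (∫ θ in (-π/2)..(π/2), 2 * π / Real.sqrt (1 - (4*ζ*Real.cos θ) ^ 2))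
        = 2 * ∫ θ in (0:ℝ)..(π/2), 2 * π / Real.sqrt (1 - (4*ζ*Real.cos θ) ^ 2) := by
      rw [show (-π/2 : ℝ) = -(π/2) by ring,
        ← intervalIntegral.integral_add_adjacent_intervals (b := (0:ℝ))
          (hintf _ _) (hintf _ _), heven]
      ring
    rw [hsplit]
    -- reflection θ ↦ π/2 - θ turns cos into sin
    have hrefl : (∫ θ in (0:ℝ)..(π/2), 2 * π / Real.sqrt (1 - (4*ζ*Real.cos θ) ^ 2))
        = ∫ θ in (0:ℝ)..(π/2), 2 * π / Real.sqrt (1 - (4*ζ*Real.sin θ) ^ 2) := by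
      have h := intervalIntegral.integral_comp_sub_left (a := (0:ℝ)) (b := π/2)
        (fun θ => 2 * π / Real.sqrt (1 - (4*ζ*Real.sin θ) ^ 2)) (π/2)
      simp only [Real.sin_pi_div_two_sub, sub_self, sub_zero] at h
      exact h
    rw [hrefl]
    -- pull constant and relate to ellipticK
    have hKval : ellipticK (4*ζ) = ∫ θ in (0:ℝ)..(π/2),
        (Real.sqrt (1 - (4*ζ*Real.sin θ) ^ 2))⁻¹ := by
      rw [ellipticK, ← intervalIntegral.integral_of_le (by positivity : (0:ℝ) ≤ π/2)]
      refine intervalIntegral.integral_congr fun θ _ => ?_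
      rw [one_div, show (4*ζ) ^ 2 * Real.sin θ ^ 2 = (4*ζ*Real.sin θ) ^ 2 by ring]
    have hpull : (∫ θ in (0:ℝ)..(π/2), 2 * π / Real.sqrt (1 - (4*ζ*Real.sin θ) ^ 2))
        = 2 * π * ∫ θ in (0:ℝ)..(π/2), (Real.sqrt (1 - (4*ζ*Real.sin θ) ^ 2))⁻¹ := by
      rw [← intervalIntegral.integral_const_mul]
      refine intervalIntegral.integral_congr fun θ _ => ?_
      rw [div_eq_mul_inv]
    rw [hpull, ← hKval, smul_eq_mul]
    ring
  -- finish: pull out the constant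
  have hsplitf : ∀ ω : ℝ × ℝ,
      1 / (4 * π ^ 2 * κ * (1 - 2 * ζ * Real.cos ω.1 - 2 * ζ * Real.cos ω.2))
      = (4 * π ^ 2 * κ)⁻¹ * (1 - 2*ζ*Real.cos ω.1 - 2*ζ*Real.cos ω.2)⁻¹ := by
    intro ω; rw [one_div, mul_inv]
  simp_rw [hsplitf]
  rw [MeasureTheory.integral_const_mul, key]
  field_simp
  ring
end

section
/- For fixed SNR > 0, as ζ → (1/4)⁻ the asymptotic mutual information rate I_s(ζ) = (1/4π²)∫∫ (1/2)log(1 + SNR/((2/π)K(4ζ)(1 − 2ζcos ω₁ − 2ζcos ω₂))) dω₁dω₂ converges to 0. -/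
open Real MeasureTheory Filter

/-- Asymptotic mutual information rate of the hidden SFCAR model. -/
noncomputable def Is (ζ snr : ℝ) : ℝ :=
  (1 / (4 * π ^ 2)) *
    ∫ ω : ℝ × ℝ in (Set.Ioc (-π) π ×ˢ Set.Ioc (-π) π),
      (1/2) * Real.log (1 + snr /
        ((2/π) * ellipticK (4 * ζ) * (1 - 2 * ζ * Real.cos ω.1 - 2 * ζ * Real.cos ω.2)))

/- ### Auxiliary lemmas -/

lemma log_add_one_le_two_sqrt {x : ℝ} (hx : 0 ≤ x) : Real.log (1 + x) ≤ 2 * Real.sqrt x := by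
  have h0 : (0:ℝ) < 1 + Real.sqrt x := by positivity
  have h1 : Real.sqrt (1 + x) ≤ 1 + Real.sqrt x := by
    have h : (1:ℝ) + x ≤ (1 + Real.sqrt x) ^ 2 := by
      have := Real.sq_sqrt hx
      nlinarith [Real.sqrt_nonneg x]
    calc Real.sqrt (1 + x) ≤ Real.sqrt ((1 + Real.sqrt x)^2) := Real.sqrt_le_sqrt h
      _ = 1 + Real.sqrt x := Real.sqrt_sq h0.le
  have h2 : Real.log (Real.sqrt (1 + x)) = Real.log (1 + x) / 2 :=
    Real.log_sqrt (by linarith)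
  have h3 : Real.log (Real.sqrt (1 + x)) ≤ Real.log (1 + Real.sqrt x) :=
    Real.log_le_log (Real.sqrt_pos.2 (by linarith)) h1
  have h4 : Real.log (1 + Real.sqrt x) ≤ Real.sqrt x := by
    have := Real.log_le_sub_one_of_pos h0
    linarith
  linarith

lemma one_sub_cos_ge {x : ℝ} (hx : |x| ≤ π) : x ^ 2 / 6 ≤ 1 - Real.cos x := by
  have habs : Real.cos x = Real.cos |x| := (Real.cos_abs x).symm
  set y := |x| with hy
  have hy0 : 0 ≤ y := abs_nonneg x
  have hx2 : x ^ 2 = y ^ 2 := (sq_abs x).symm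
  rw [habs, hx2]
  have hsin : 2 / π * (y / 2) ≤ Real.sin (y / 2) :=
    Real.mul_le_sin (by positivity) (by linarith)
  have hcos : Real.cos y = 1 - 2 * Real.sin (y / 2) ^ 2 := by
    have h1 := Real.cos_sq (y / 2)
    have h2 : Real.sin (y/2)^2 + Real.cos (y/2)^2 = 1 := Real.sin_sq_add_cos_sq _
    rw [show 2 * (y/2) = y by ring] at h1
    linarith
  rw [hcos]
  have hπ : π < 3.15 := by
    have := Real.pi_lt_d2; norm_num at this ⊢; linarith
  have hπ0 : 0 < π := Real.pi_pos
  have h1 : y / π ≤ Real.sin (y/2) := by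
    have he : 2 / π * (y/2) = y / π := by field_simp
    linarith [he ▸ hsin]
  have h2 : (y/π)^2 ≤ Real.sin (y/2)^2 := by
    have h3 : 0 ≤ y / π := by positivity
    nlinarith
  have h5 : y^2/12 ≤ (y/π)^2 := by
    rw [div_pow]
    apply div_le_div_of_nonneg_left (sq_nonneg y) (by positivity) (by nlinarith)
  nlinarith

lemma denom_pos {k θ : ℝ} (hk : k ^ 2 < 1) : 0 < 1 - k ^ 2 * Real.sin θ ^ 2 := by
  nlinarith [Real.sin_sq_le_one θ, sq_nonneg k, sq_nonneg (Real.sin θ)]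

lemma ellipticK_cont {k : ℝ} (hk : k ^ 2 < 1) :
    Continuous (fun θ => 1 / Real.sqrt (1 - k ^ 2 * Real.sin θ ^ 2)) := by
  apply Continuous.div continuous_const
  · exact Real.continuous_sqrt.comp (by continuity)
  · intro θ
    exact (Real.sqrt_pos.2 (denom_pos hk)).ne'

lemma ellipticK_integrableOn {k : ℝ} (hk : k ^ 2 < 1) :
    IntegrableOn (fun θ => 1 / Real.sqrt (1 - k ^ 2 * Real.sin θ ^ 2)) (Set.Ioc 0 (π/2)) :=
  (ellipticK_cont hk).integrableOn_Ioc

lemma ellipticK_ge_pi_div_two {k : ℝ} (hk : k ^ 2 < 1) : π / 2 ≤ ellipticK k := by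
  have h := Real.pi_pos
  have heq : π / 2 = ∫ _θ in Set.Ioc (0:ℝ) (π/2), (1:ℝ) := by
    simp [Real.volume_Ioc]
    linarith
  rw [heq, ellipticK]
  apply setIntegral_mono_on (by simp) (ellipticK_integrableOn hk) measurableSet_Ioc
  intro θ _
  rw [le_div_iff₀ (Real.sqrt_pos.2 (denom_pos hk)), one_mul]
  calc Real.sqrt (1 - k^2 * Real.sin θ^2) ≤ Real.sqrt 1 := by
        apply Real.sqrt_le_sqrt; nlinarith [sq_nonneg k, sq_nonneg (Real.sin θ)]
    _ = 1 := Real.sqrt_one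

lemma ellipticK_lb {k : ℝ} (hk0 : 0 ≤ k) (hk1 : k < 1) :
    Real.log (π/2 + Real.sqrt (1 - k^2)) - Real.log (Real.sqrt (1 - k^2)) ≤ ellipticK k := by
  have hπ := Real.pi_pos
  have hk2 : k ^ 2 < 1 := by nlinarith
  set ε := Real.sqrt (1 - k^2) with hε
  have hεpos : 0 < ε := Real.sqrt_pos.2 (by nlinarith)
  have hεsq : ε ^ 2 = 1 - k ^ 2 := Real.sq_sqrt (by nlinarith)
  have hpt : ∀ θ ∈ Set.Ioc (0:ℝ) (π/2),
      1 / (ε + (π/2 - θ)) ≤ 1 / Real.sqrt (1 - k^2 * Real.sin θ^2) := by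
    intro θ hθ
    have hcos0 : 0 ≤ Real.cos θ :=
      Real.cos_nonneg_of_mem_Icc ⟨by linarith [hθ.1], hθ.2⟩
    have hsc : Real.sin θ ^ 2 = 1 - Real.cos θ ^ 2 := by
      have := Real.sin_sq_add_cos_sq θ; linarith
    have h1 : Real.sqrt (1 - k^2 * Real.sin θ^2) ≤ ε + Real.cos θ := by
      have hle : 1 - k^2 * Real.sin θ^2 ≤ (ε + Real.cos θ)^2 := by
        rw [hsc]; nlinarith [mul_nonneg hεpos.le hcos0, sq_nonneg k, sq_nonneg (Real.cos θ)]
      calc Real.sqrt (1 - k^2 * Real.sin θ^2) ≤ Real.sqrt ((ε + Real.cos θ)^2) :=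
            Real.sqrt_le_sqrt hle
        _ = ε + Real.cos θ := Real.sqrt_sq (by linarith)
    have h2 : Real.cos θ ≤ π/2 - θ := by
      rw [← Real.sin_pi_div_two_sub]
      exact Real.sin_le (by linarith [hθ.2])
    apply one_div_le_one_div_of_le (Real.sqrt_pos.2 (denom_pos hk2))
    linarith
  have hlint : IntegrableOn (fun θ => 1 / (ε + (π/2 - θ))) (Set.Ioc 0 (π/2)) := by
    apply (ContinuousOn.integrableOn_compact isCompact_Icc ?_).mono_set Set.Ioc_subset_Icc_self
    apply ContinuousOn.div continuousOn_const (by fun_prop)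
    intro x hx
    simp only [Set.mem_Icc] at hx
    have h : 0 < ε + (π/2 - x) := by linarith [hx.2]
    exact h.ne'
  have hval : ∫ θ in Set.Ioc (0:ℝ) (π/2), 1 / (ε + (π/2 - θ))
      = Real.log (π/2 + ε) - Real.log ε := by
    rw [← intervalIntegral.integral_of_le (by linarith : (0:ℝ) ≤ π/2)]
    have e1 : (∫ θ in (0:ℝ)..(π/2), 1 / (ε + (π/2 - θ)))
        = ∫ x in (0:ℝ)..(π/2), 1 / (ε + x) := by
      have := intervalIntegral.integral_comp_sub_left (a := (0:ℝ)) (b := π/2)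
        (fun u => 1 / (ε + u)) (π/2)
      simpa using this
    have e2 : (∫ x in (0:ℝ)..(π/2), 1 / (ε + x)) = ∫ x in ε..(ε + π/2), 1 / x := by
      have := intervalIntegral.integral_comp_add_left (a := (0:ℝ)) (b := π/2)
        (fun u => 1 / u) ε
      simpa using this
    rw [e1, e2, integral_one_div]
    · rw [Real.log_div (by linarith) hεpos.ne']
      ring_nf
    · intro h
      rcases Set.mem_uIcc.1 h with ⟨h1, _⟩ | ⟨_, h2⟩ <;> linarith
  calc Real.log (π/2 + ε) - Real.log ε
      = ∫ θ in Set.Ioc (0:ℝ) (π/2), 1 / (ε + (π/2 - θ)) := hval.symm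
    _ ≤ ellipticK k :=
      setIntegral_mono_on hlint (ellipticK_integrableOn hk2) measurableSet_Ioc hpt

lemma tendsto_ellipticK_atTop :
    Tendsto (fun ζ : ℝ => ellipticK (4 * ζ)) (nhdsWithin (1/4) (Set.Ico 0 (1/4))) atTop := by
  have hπ := Real.pi_pos
  set F := nhdsWithin (1/4 : ℝ) (Set.Ico 0 (1/4)) with hF
  have hev : ∀ᶠ ζ in F, ζ ∈ Set.Ico (0:ℝ) (1/4) := eventually_mem_nhdsWithin
  have hε : Tendsto (fun ζ : ℝ => Real.sqrt (1 - (4*ζ)^2)) F (nhdsWithin 0 (Set.Ioi 0)) := by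
    rw [tendsto_nhdsWithin_iff]
    constructor
    · have hc : Continuous (fun ζ : ℝ => Real.sqrt (1 - (4*ζ)^2)) := by
        apply Real.continuous_sqrt.comp; continuity
      have := hc.tendsto (1/4 : ℝ)
      simp only [show (1:ℝ) - (4*(1/4:ℝ))^2 = 0 by norm_num, Real.sqrt_zero] at this
      exact this.mono_left nhdsWithin_le_nhds
    · filter_upwards [hev] with ζ hζ
      have : (4*ζ)^2 < 1 := by nlinarith [hζ.1, hζ.2]
      exact Real.sqrt_pos.2 (by nlinarith)
  apply tendsto_atTop_mono' F
    (f₁ := fun ζ : ℝ => Real.log (π/2 + Real.sqrt (1 - (4*ζ)^2))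
      - Real.log (Real.sqrt (1 - (4*ζ)^2)))
  · filter_upwards [hev] with ζ hζ
    exact ellipticK_lb (by linarith [hζ.1]) (by linarith [hζ.2])
  · have h1 : Tendsto (fun ζ : ℝ => Real.log (π/2 + Real.sqrt (1 - (4*ζ)^2))) F
        (nhds (Real.log (π/2))) := by
      have hlog : ContinuousAt Real.log (π/2 + 0) :=
        Real.continuousAt_log (by positivity)
      have hadd : Tendsto (fun ζ : ℝ => π/2 + Real.sqrt (1 - (4*ζ)^2)) F (nhds (π/2 + 0)) :=
        tendsto_const_nhds.add (hε.mono_right nhdsWithin_le_nhds)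
      have := hlog.tendsto.comp hadd
      simp only [add_zero] at this
      exact this
    have h2 : Tendsto (fun ζ : ℝ => - Real.log (Real.sqrt (1 - (4*ζ)^2))) F atTop := by
      have := Real.tendsto_log_nhdsGT_zero.comp hε
      exact tendsto_neg_atBot_atTop.comp this
    have := h1.add_atTop h2
    simpa [sub_eq_add_neg] using this

lemma sqrt_tendsto_atTop : Tendsto Real.sqrt atTop atTop := by
  have h := tendsto_rpow_atTop (by norm_num : (0:ℝ) < 1/2)
  refine h.congr' ?_
  filter_upwards [eventually_ge_atTop (0:ℝ)] with x hx
  rw [Real.sqrt_eq_rpow]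

lemma integrableOn_inv_sqrt_abs {b : ℝ} (hb : 0 ≤ b) :
    IntegrableOn (fun ω : ℝ => |ω| ^ (-(1/2) : ℝ)) (Set.Ioc (-b) b) := by
  have hpos : IntegrableOn (fun ω : ℝ => ω ^ (-(1/2) : ℝ)) (Set.Ioc 0 b) :=
    (intervalIntegral.intervalIntegrable_rpow' (by norm_num : (-1:ℝ) < -(1/2))
      (a := 0) (b := b)).1
  have h1g : IntegrableOn (fun ω : ℝ => |ω| ^ (-(1/2) : ℝ)) (Set.Ioc 0 b) := by
    apply hpos.congr_fun ?_ measurableSet_Ioc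
    intro x hx
    show x ^ (-(1/2) : ℝ) = |x| ^ (-(1/2) : ℝ)
    rw [abs_of_pos hx.1]
  have h1 : IntervalIntegrable (fun ω : ℝ => |ω| ^ (-(1/2) : ℝ)) volume 0 b :=
    (intervalIntegrable_iff_integrableOn_Ioc_of_le hb).2 h1g
  have h2 : IntervalIntegrable (fun ω : ℝ => |ω| ^ (-(1/2) : ℝ)) volume (-b) 0 := by
    rw [IntervalIntegrable.iff_comp_neg]
    simp only [neg_neg, abs_neg, neg_zero]
    exact h1.symm
  exact (intervalIntegrable_iff_integrableOn_Ioc_of_le (by linarith)).1 (h2.trans h1)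

lemma key_bound {snr ζ : ℝ} (hsnr : 0 < snr) (hζ : ζ ∈ Set.Ico (0:ℝ) (1/4))
    {ω₁ ω₂ : ℝ} (h1 : ω₁ ∈ Set.Ioc (-π) π) (h2 : ω₂ ∈ Set.Ioc (-π) π)
    (hω1 : ω₁ ≠ 0) (hω2 : ω₂ ≠ 0) :
    (1/2) * Real.log (1 + snr /
        ((2/π) * ellipticK (4 * ζ) * (1 - 2 * ζ * Real.cos ω₁ - 2 * ζ * Real.cos ω₂)))
      ≤ Real.sqrt (6*π*snr) / Real.sqrt (ellipticK (4*ζ))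
          * (|ω₁| ^ (-(1/2):ℝ) * |ω₂| ^ (-(1/2):ℝ)) := by
  have hπ := Real.pi_pos
  have hk2 : (4*ζ)^2 < 1 := by nlinarith [hζ.1, hζ.2]
  set K := ellipticK (4*ζ) with hKdef
  have hK : π/2 ≤ K := ellipticK_ge_pi_div_two hk2
  have hKpos : 0 < K := lt_of_lt_of_le (by linarith) hK
  have ha1 : |ω₁| ≤ π := abs_le.2 ⟨by linarith [h1.1], h1.2⟩
  have ha2 : |ω₂| ≤ π := abs_le.2 ⟨by linarith [h2.1], h2.2⟩
  have haω1 : 0 < |ω₁| := abs_pos.2 hω1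
  have haω2 : 0 < |ω₂| := abs_pos.2 hω2
  set s₁ := 1 - Real.cos ω₁ with hs₁def
  set s₂ := 1 - Real.cos ω₂ with hs₂def
  have hs₁ : ω₁^2/6 ≤ s₁ := one_sub_cos_ge ha1
  have hs₂ : ω₂^2/6 ≤ s₂ := one_sub_cos_ge ha2
  have hs₁pos : 0 < s₁ := lt_of_lt_of_le (by positivity) hs₁
  have hs₂pos : 0 < s₂ := lt_of_lt_of_le (by positivity) hs₂
  set d := 1 - 2 * ζ * Real.cos ω₁ - 2 * ζ * Real.cos ω₂ with hddef
  have hd : (s₁ + s₂)/4 ≤ d := by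
    have hc1 := Real.neg_one_le_cos ω₁
    have hc1' := Real.cos_le_one ω₁
    have hc2 := Real.neg_one_le_cos ω₂
    have hc2' := Real.cos_le_one ω₂
    have hz1 := hζ.1
    have hz2 := hζ.2
    rw [hs₁def, hs₂def, hddef]
    nlinarith [mul_nonneg hz1 (sub_nonneg.2 hc1'), mul_nonneg hz1 (sub_nonneg.2 hc2'),
      mul_nonneg hz1 (by linarith : (0:ℝ) ≤ 1 + Real.cos ω₁),
      mul_nonneg hz1 (by linarith : (0:ℝ) ≤ 1 + Real.cos ω₂)]
  have hgm : Real.sqrt (s₁ * s₂) ≤ (s₁ + s₂)/2 := by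
    rw [Real.sqrt_mul hs₁pos.le]
    nlinarith [sq_nonneg (Real.sqrt s₁ - Real.sqrt s₂), Real.sq_sqrt hs₁pos.le,
      Real.sq_sqrt hs₂pos.le, Real.sqrt_nonneg s₁, Real.sqrt_nonneg s₂]
  have hb : |ω₁| * |ω₂| / 6 ≤ Real.sqrt (s₁ * s₂) := by
    have hmono : Real.sqrt ((ω₁^2/6) * (ω₂^2/6)) ≤ Real.sqrt (s₁ * s₂) := by
      apply Real.sqrt_le_sqrt
      apply mul_le_mul hs₁ hs₂ (by positivity) hs₁pos.le
    have hval : Real.sqrt ((ω₁^2/6) * (ω₂^2/6)) = |ω₁| * |ω₂| / 6 := by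
      rw [show (ω₁^2/6) * (ω₂^2/6) = (ω₁*ω₂/6)^2 by ring, Real.sqrt_sq_eq_abs,
        abs_div, abs_mul]
      norm_num
    linarith [hval ▸ hmono]
  have hdlow : |ω₁| * |ω₂| / 12 ≤ d := by linarith
  set D := (2/π) * K * d with hDdef
  have hDlow : K * (|ω₁| * |ω₂|) / (6*π) ≤ D := by
    have h := mul_le_mul_of_nonneg_left hdlow (by positivity : (0:ℝ) ≤ (2/π) * K)
    calc K * (|ω₁| * |ω₂|) / (6*π) = (2/π) * K * (|ω₁| * |ω₂| / 12) := by
          field_simp; ring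
      _ ≤ (2/π) * K * d := h
  have hlowpos : 0 < K * (|ω₁| * |ω₂|) / (6*π) := by positivity
  have hDpos : 0 < D := lt_of_lt_of_le hlowpos hDlow
  have step1 : (1/2) * Real.log (1 + snr / D) ≤ Real.sqrt (snr / D) := by
    have := log_add_one_le_two_sqrt (x := snr / D) (by positivity)
    linarith
  have step2 : Real.sqrt (snr / D) ≤ Real.sqrt (snr / (K * (|ω₁| * |ω₂|) / (6*π))) := by
    apply Real.sqrt_le_sqrt
    exact div_le_div_of_nonneg_left hsnr.le hlowpos hDlow
  have step3 : Real.sqrt (snr / (K * (|ω₁| * |ω₂|) / (6*π)))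
      = Real.sqrt (6*π*snr) / Real.sqrt K * (|ω₁| ^ (-(1/2):ℝ) * |ω₂| ^ (-(1/2):ℝ)) := by
    have e1 : snr / (K * (|ω₁| * |ω₂|) / (6*π)) = (6*π*snr) / (K * (|ω₁| * |ω₂|)) := by
      field_simp
    rw [e1, Real.sqrt_div (by positivity), Real.sqrt_mul hKpos.le,
      Real.sqrt_mul haω1.le]
    have r1 : |ω₁| ^ (-(1/2):ℝ) = (Real.sqrt |ω₁|)⁻¹ := by
      rw [Real.rpow_neg (abs_nonneg _), Real.sqrt_eq_rpow]
    have r2 : |ω₂| ^ (-(1/2):ℝ) = (Real.sqrt |ω₂|)⁻¹ := by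
      rw [Real.rpow_neg (abs_nonneg _), Real.sqrt_eq_rpow]
    rw [r1, r2]
    have hsK : 0 < Real.sqrt K := Real.sqrt_pos.2 hKpos
    have hs1 : 0 < Real.sqrt |ω₁| := Real.sqrt_pos.2 haω1
    have hs2 : 0 < Real.sqrt |ω₂| := Real.sqrt_pos.2 haω2
    field_simp
  calc (1/2) * Real.log (1 + snr / D) ≤ Real.sqrt (snr / D) := step1
    _ ≤ Real.sqrt (snr / (K * (|ω₁| * |ω₂|) / (6*π))) := step2
    _ = _ := step3

lemma integrand_nonneg {snr ζ : ℝ} (hsnr : 0 < snr) (hζ : ζ ∈ Set.Ico (0:ℝ) (1/4))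
    (ω : ℝ × ℝ) :
    0 ≤ (1/2) * Real.log (1 + snr /
        ((2/π) * ellipticK (4 * ζ) * (1 - 2 * ζ * Real.cos ω.1 - 2 * ζ * Real.cos ω.2))) := by
  have hπ := Real.pi_pos
  have hk2 : (4*ζ)^2 < 1 := by nlinarith [hζ.1, hζ.2]
  have hK : π/2 ≤ ellipticK (4*ζ) := ellipticK_ge_pi_div_two hk2
  have hd : 0 ≤ 1 - 2 * ζ * Real.cos ω.1 - 2 * ζ * Real.cos ω.2 := by
    have hc1 := Real.neg_one_le_cos ω.1
    have hc1' := Real.cos_le_one ω.1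
    have hc2 := Real.neg_one_le_cos ω.2
    have hc2' := Real.cos_le_one ω.2
    nlinarith [hζ.1, hζ.2, mul_nonneg hζ.1 (sub_nonneg.2 hc1'),
      mul_nonneg hζ.1 (sub_nonneg.2 hc2')]
  have hD : 0 ≤ (2/π) * ellipticK (4 * ζ) * (1 - 2 * ζ * Real.cos ω.1 - 2 * ζ * Real.cos ω.2) := by
    have h0 : 0 ≤ (2/π) * ellipticK (4*ζ) := by
      apply mul_nonneg (by positivity) (by linarith)
    exact mul_nonneg h0 hd
  have hlog : 0 ≤ Real.log (1 + snr / ((2/π) * ellipticK (4 * ζ) *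
      (1 - 2 * ζ * Real.cos ω.1 - 2 * ζ * Real.cos ω.2))) := by
    apply Real.log_nonneg
    have h1 : 0 ≤ snr / ((2/π) * ellipticK (4 * ζ) *
        (1 - 2 * ζ * Real.cos ω.1 - 2 * ζ * Real.cos ω.2)) := div_nonneg hsnr.le hD
    linarith
  linarith

/-- For fixed `SNR > 0`, the asymptotic MI rate vanishes as the edge dependence factor
`ζ → (1/4)⁻` (perfect correlation). -/
theorem stmt10 (snr : ℝ) (hsnr : 0 < snr) :
    Filter.Tendsto (fun ζ => Is ζ snr)
      (nhdsWithin (1/4) (Set.Ico 0 (1/4))) (nhds 0) := by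
  have hπ := Real.pi_pos
  set F := nhdsWithin (1/4 : ℝ) (Set.Ico 0 (1/4)) with hF
  set B := ∫ ω in Set.Ioc (-π) π, |ω| ^ (-(1/2):ℝ) with hB
  set box := Set.Ioc (-π) π ×ˢ Set.Ioc (-π) π with hbox
  have hev : ∀ᶠ ζ in F, ζ ∈ Set.Ico (0:ℝ) (1/4) := eventually_mem_nhdsWithin
  have hsqrtK : Tendsto (fun ζ : ℝ => Real.sqrt (ellipticK (4*ζ))) F atTop :=
    sqrt_tendsto_atTop.comp tendsto_ellipticK_atTop
  set u : ℝ → ℝ := fun ζ =>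
    (1/(4*π^2)) * ((Real.sqrt (6*π*snr) * (B * B)) / Real.sqrt (ellipticK (4*ζ))) with hu_def
  have hu : Tendsto u F (nhds 0) := by
    have h1 : Tendsto (fun ζ : ℝ =>
        (Real.sqrt (6*π*snr) * (B * B)) / Real.sqrt (ellipticK (4*ζ))) F (nhds 0) :=
      Tendsto.div_atTop tendsto_const_nhds hsqrtK
    have h2 := h1.const_mul (1/(4*π^2))
    rw [mul_zero] at h2
    exact h2
  apply tendsto_of_tendsto_of_tendsto_of_le_of_le' (tendsto_const_nhds (x := (0:ℝ))) hu
  · -- 0 ≤ Is ζ snr eventually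
    filter_upwards [hev] with ζ hζ
    apply mul_nonneg (by positivity)
    apply setIntegral_nonneg ((measurableSet_Ioc).prod measurableSet_Ioc)
    intro ω _
    exact integrand_nonneg hsnr hζ ω
  · -- Is ζ snr ≤ u ζ eventually
    filter_upwards [hev] with ζ hζ
    have hk2 : (4*ζ)^2 < 1 := by nlinarith [hζ.1, hζ.2]
    have hK : π/2 ≤ ellipticK (4*ζ) := ellipticK_ge_pi_div_two hk2
    have hKpos : 0 < ellipticK (4*ζ) := by linarith
    set c := Real.sqrt (6*π*snr) / Real.sqrt (ellipticK (4*ζ)) with hc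
    -- integrability of the dominating function
    have hprod : IntegrableOn
        (fun ω : ℝ × ℝ => |ω.1| ^ (-(1/2):ℝ) * |ω.2| ^ (-(1/2):ℝ)) box := by
      rw [hbox, IntegrableOn, Measure.volume_eq_prod, ← Measure.prod_restrict]
      exact (integrableOn_inv_sqrt_abs hπ.le).mul_prod (integrableOn_inv_sqrt_abs hπ.le)
    have hg_int : IntegrableOn
        (fun ω : ℝ × ℝ => c * (|ω.1| ^ (-(1/2):ℝ) * |ω.2| ^ (-(1/2):ℝ))) box :=
      hprod.const_mul c
    -- a.e. facts
    have hae1 : ∀ᵐ ω : ℝ × ℝ ∂(volume.restrict box), ω.1 ≠ 0 := by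
      apply ae_restrict_of_ae
      rw [ae_iff]
      have hset : {ω : ℝ × ℝ | ¬ ω.1 ≠ 0} = ({0} : Set ℝ) ×ˢ (Set.univ : Set ℝ) := by
        ext ω
        simp only [Set.mem_setOf_eq, not_not, Set.mem_prod, Set.mem_singleton_iff,
          Set.mem_univ, and_true]
      rw [hset, Measure.volume_eq_prod, Measure.prod_prod]
      simp
    have hae2 : ∀ᵐ ω : ℝ × ℝ ∂(volume.restrict box), ω.2 ≠ 0 := by
      apply ae_restrict_of_ae
      rw [ae_iff]
      have hset : {ω : ℝ × ℝ | ¬ ω.2 ≠ 0} = (Set.univ : Set ℝ) ×ˢ ({0} : Set ℝ) := by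
        ext ω
        simp only [Set.mem_setOf_eq, not_not, Set.mem_prod, Set.mem_singleton_iff,
          Set.mem_univ, true_and]
      rw [hset, Measure.volume_eq_prod, Measure.prod_prod]
      simp
    have hmem : ∀ᵐ ω : ℝ × ℝ ∂(volume.restrict box), ω ∈ box :=
      ae_restrict_mem ((measurableSet_Ioc).prod measurableSet_Ioc)
    have hle : (∫ ω : ℝ × ℝ in box,
        (1/2) * Real.log (1 + snr /
          ((2/π) * ellipticK (4 * ζ) * (1 - 2 * ζ * Real.cos ω.1 - 2 * ζ * Real.cos ω.2))))
        ≤ ∫ ω : ℝ × ℝ in box, c * (|ω.1| ^ (-(1/2):ℝ) * |ω.2| ^ (-(1/2):ℝ)) := by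
      apply integral_mono_of_nonneg
      · exact Eventually.of_forall fun ω => integrand_nonneg hsnr hζ ω
      · exact hg_int
      · filter_upwards [hae1, hae2, hmem] with ω hω1 hω2 hωm
        exact key_bound hsnr hζ hωm.1 hωm.2 hω1 hω2
    have hval : (∫ ω : ℝ × ℝ in box, c * (|ω.1| ^ (-(1/2):ℝ) * |ω.2| ^ (-(1/2):ℝ)))
        = c * (B * B) := by
      rw [MeasureTheory.integral_const_mul]
      congr 1
      rw [hbox, Measure.volume_eq_prod, ← Measure.prod_restrict, hB]
      exact integral_prod_mul (μ := volume.restrict (Set.Ioc (-π) π))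
        (ν := volume.restrict (Set.Ioc (-π) π))
        (fun x => |x| ^ (-(1/2):ℝ)) (fun x => |x| ^ (-(1/2):ℝ))
    have : Is ζ snr ≤ (1/(4*π^2)) * (c * (B * B)) := by
      rw [Is]
      apply mul_le_mul_of_nonneg_left _ (by positivity)
      rw [← hval]
      exact hle
    calc Is ζ snr ≤ (1/(4*π^2)) * (c * (B * B)) := this
      _ = u ζ := by rw [hu_def, hc]; ring
end

section
/- The edge correlation factor ρ(d) = α d K₁(α d) is strictly decreasing in the sensor spacing d > 0 for fixed α > 0, and 0 < ρ(d) < 1 for all d > 0. -/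
open Real MeasureTheory

/-- Modified Bessel function of the second kind of order 1 (integral representation). -/
noncomputable def besselK1 (x : ℝ) : ℝ :=
  ∫ t in Set.Ioi (0:ℝ), Real.exp (-x * Real.cosh t) * Real.cosh t

lemma sqrt_aux {x : ℝ} (hx : 0 ≤ x) (t : ℝ) :
    Real.sqrt (x ^ 2 + (x * Real.sinh t) ^ 2) = x * Real.cosh t := by
  have h : x ^ 2 + (x * Real.sinh t) ^ 2 = (x * Real.cosh t) ^ 2 := by
    have := Real.cosh_sq t
    nlinarith [Real.cosh_sq t]
  rw [h, Real.sqrt_sq (by positivity)]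

lemma key_repr {x : ℝ} (hx : 0 < x) :
    x * besselK1 x = ∫ v in Set.Ioi (0:ℝ), Real.exp (-Real.sqrt (x ^ 2 + v ^ 2)) := by
  have himg : (fun t => x * Real.sinh t) '' Set.Ioi (0:ℝ) = Set.Ioi (0:ℝ) := by
    ext v
    constructor
    · rintro ⟨t, ht, rfl⟩
      exact mul_pos hx (by simpa using Real.sinh_pos_iff.mpr ht)
    · intro hv
      refine ⟨Real.arsinh (v / x), ?_, ?_⟩
      · simpa using Real.arsinh_pos_iff.mpr (div_pos hv hx)
      · simp only [Real.sinh_arsinh]; field_simp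
  have hderiv : ∀ t ∈ Set.Ioi (0:ℝ),
      HasDerivWithinAt (fun t => x * Real.sinh t) (x * Real.cosh t) (Set.Ioi (0:ℝ)) t :=
    fun t _ => ((Real.hasDerivAt_sinh t).const_mul x).hasDerivWithinAt
  have hinj : Set.InjOn (fun t => x * Real.sinh t) (Set.Ioi (0:ℝ)) := fun a _ b _ h =>
    Real.sinh_injective (mul_left_cancel₀ hx.ne' h)
  have := MeasureTheory.integral_image_eq_integral_abs_deriv_smul measurableSet_Ioi hderiv hinj
    (fun v => Real.exp (-Real.sqrt (x ^ 2 + v ^ 2)))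
  rw [himg] at this
  rw [this]
  rw [besselK1, ← MeasureTheory.integral_const_mul]
  apply MeasureTheory.setIntegral_congr_fun measurableSet_Ioi
  intro t _
  have hc : (0:ℝ) < Real.cosh t := Real.cosh_pos t
  simp only [smul_eq_mul]
  rw [sqrt_aux hx.le t, abs_of_pos (mul_pos hx hc), neg_mul]
  ring

lemma integrable_aux (x : ℝ) :
    MeasureTheory.IntegrableOn (fun v => Real.exp (-Real.sqrt (x ^ 2 + v ^ 2)))
      (Set.Ioi (0:ℝ)) := by
  have hcont : Continuous fun v : ℝ => Real.exp (-Real.sqrt (x ^ 2 + v ^ 2)) := by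
    fun_prop
  refine MeasureTheory.Integrable.mono' (g := fun v => Real.exp (-v))
    (by simpa [MeasureTheory.IntegrableOn] using exp_neg_integrableOn_Ioi 0 one_pos)
    hcont.aestronglyMeasurable ?_
  filter_upwards [MeasureTheory.ae_restrict_mem measurableSet_Ioi] with v hv
  rw [Real.norm_eq_abs, abs_of_pos (Real.exp_pos _)]
  apply Real.exp_le_exp.mpr
  simp only [neg_le_neg_iff]
  calc v = Real.sqrt (v ^ 2) := (Real.sqrt_sq (le_of_lt hv)).symm
    _ ≤ Real.sqrt (x ^ 2 + v ^ 2) := Real.sqrt_le_sqrt (by nlinarith)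

/-- Strict integral comparison on `Ioi 0`. -/
lemma intcomp {f g : ℝ → ℝ} (hf : MeasureTheory.IntegrableOn f (Set.Ioi (0:ℝ)))
    (hg : MeasureTheory.IntegrableOn g (Set.Ioi (0:ℝ)))
    (hlt : ∀ v ∈ Set.Ioi (0:ℝ), f v < g v) :
    (∫ v in Set.Ioi (0:ℝ), f v) < ∫ v in Set.Ioi (0:ℝ), g v := by
  have hsub : MeasureTheory.IntegrableOn (fun v => g v - f v) (Set.Ioi (0:ℝ)) := hg.sub hf
  have hpos : 0 < ∫ v in Set.Ioi (0:ℝ), (g v - f v) := by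
    rw [MeasureTheory.setIntegral_pos_iff_support_of_nonneg_ae ?_ hsub]
    · have hss : Set.Ioi (0:ℝ) ⊆ Function.support (fun v => g v - f v) ∩ Set.Ioi (0:ℝ) := by
        intro v hv
        exact ⟨by simp [sub_ne_zero.mpr (hlt v hv).ne'], hv⟩
      calc (0:ENNReal) < ⊤ := by simp
        _ = MeasureTheory.volume (Set.Ioi (0:ℝ)) := Real.volume_Ioi.symm
        _ ≤ _ := MeasureTheory.measure_mono hss
    · filter_upwards [MeasureTheory.ae_restrict_mem measurableSet_Ioi] with v hv
      exact sub_nonneg.mpr (hlt v hv).le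
  have := MeasureTheory.integral_sub hg hf
  rw [this] at hpos
  linarith

lemma F_lt_one {x : ℝ} (hx : 0 < x) : x * besselK1 x < 1 := by
  rw [key_repr hx, ← integral_exp_neg_Ioi_zero]
  refine intcomp (integrable_aux x) ?_ ?_
  · simpa using exp_neg_integrableOn_Ioi 0 one_pos
  · intro v hv
    apply Real.exp_lt_exp.mpr
    simp only [neg_lt_neg_iff]
    calc v = Real.sqrt (v ^ 2) := (Real.sqrt_sq (le_of_lt hv)).symm
      _ < Real.sqrt (x ^ 2 + v ^ 2) := by
          apply Real.sqrt_lt_sqrt (by positivity); nlinarith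

lemma F_pos {x : ℝ} (hx : 0 < x) : 0 < x * besselK1 x := by
  rw [key_repr hx]
  have h0 : (0:ℝ) = ∫ _v in Set.Ioi (0:ℝ), (0:ℝ) := by
    rw [MeasureTheory.integral_zero]
  conv_lhs => rw [h0]
  refine intcomp (by exact MeasureTheory.integrableOn_zero) (integrable_aux x) ?_
  intro v _
  exact Real.exp_pos _

lemma F_anti : StrictAntiOn (fun x : ℝ => x * besselK1 x) (Set.Ioi 0) := by
  intro x hx y hy hxy
  simp only
  rw [key_repr hx, key_repr hy]
  refine intcomp (integrable_aux y) (integrable_aux x) ?_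
  intro v _
  apply Real.exp_lt_exp.mpr
  simp only [neg_lt_neg_iff]
  apply Real.sqrt_lt_sqrt (by positivity)
  have hx0 : (0:ℝ) < x := hx
  nlinarith

/-- For fixed `α > 0`, the edge correlation factor `ρ(d) = α d K₁(α d)` is strictly
decreasing in the sensor spacing `d > 0`, and `0 < ρ(d) < 1` for all `d > 0`. -/
theorem stmt15 (α : ℝ) (hα : 0 < α) :
    StrictAntiOn (fun d : ℝ => α * d * besselK1 (α * d)) (Set.Ioi 0) ∧
    ∀ d : ℝ, 0 < d →
      0 < α * d * besselK1 (α * d) ∧ α * d * besselK1 (α * d) < 1 := by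
  constructor
  · intro d1 h1 d2 h2 h12
    have := F_anti (Set.mem_Ioi.mpr (mul_pos hα h1)) (Set.mem_Ioi.mpr (mul_pos hα h2))
      (by exact mul_lt_mul_of_pos_left h12 hα)
    simpa using this
  · intro d hd
    exact ⟨F_pos (mul_pos hα hd), F_lt_one (mul_pos hα hd)⟩
end
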